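/- Let ℱ be the algebra of bounded sequences (A_n) of matrices A_n ∈ ℂ^{δ(n)×δ(n)}. A sequence (K_n) ∈ ℱ satisfies lim_{k→∞} sup_{n≥k} Σ_k(K_n) = 0 if and only if lim_{k→∞} limsup_{n→∞} Σ_k(K_n) = 0. -/

import Mathlib

open Filter Topology Matrix
set_option synthInstance.maxHeartbeats 1000000
set_option maxHeartbeats 1000000

/-- The (L²) operator norm of a complex square matrix. -/
noncomputable def opNorm {n : ℕ} (A : Matrix (Fin n) (Fin n) ℂ) : ℝ :=
  ‖Matrix.toEuclideanCLM (𝕜 := ℂ) A‖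

/-- The increasingly sorted list of singular values of `A`
(square roots of the eigenvalues of `Aᴴ * A`). -/
noncomputable def svList {n : ℕ} (A : Matrix (Fin n) (Fin n) ℂ) : List ℝ :=
  (Finset.univ.val.map fun i =>
    Real.sqrt ((Matrix.isHermitian_conjTranspose_mul_self A).eigenvalues i)).sort (· ≤ ·)

/-- `sigLower A k` is the `k`-th smallest singular value of `A` (1-indexed, `σ_k`);
`0` if `k` is out of range. -/
noncomputable def sigLower {n : ℕ} (A : Matrix (Fin n) (Fin n) ℂ) (k : ℕ) : ℝ :=
  (svList A).getD (k - 1) 0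

/-- `sigUpper A k` is the `k`-th largest singular value of `A` (1-indexed, `Σ_k`);
`0` if `k` is out of range (in particular for `k > n`). -/
noncomputable def sigUpper {n : ℕ} (A : Matrix (Fin n) (Fin n) ℂ) (k : ℕ) : ℝ :=
  if 1 ≤ k ∧ k ≤ n then (svList A).getD (n - k) 0 else 0

/-- `eigCount hA U` is the number of eigenvalues (with multiplicity) of the
hermitian matrix `A` lying in `U ⊆ ℝ`. -/
noncomputable def eigCount {n : ℕ} {A : Matrix (Fin n) (Fin n) ℂ}
    (hA : A.IsHermitian) (U : Set ℝ) : ℕ :=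
  Nat.card {i : Fin n // hA.eigenvalues i ∈ U}

lemma eig_le_sq {n : ℕ} (A : Matrix (Fin n) (Fin n) ℂ) (i : Fin n) :
    (Matrix.isHermitian_conjTranspose_mul_self A).eigenvalues i ≤ opNorm A ^ 2 := by
  set lam := (Matrix.isHermitian_conjTranspose_mul_self A).eigenvalues i with hlam
  have h1 : lam ∈ spectrum ℝ (Aᴴ * A) :=
    (Matrix.isHermitian_conjTranspose_mul_self A).eigenvalues_mem_spectrum_real i
  have h2 : ((lam : ℂ)) ∈ spectrum ℂ (Aᴴ * A) := spectrum.algebraMap_mem ℂ h1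
  have h3 : ((lam : ℂ)) ∈ spectrum ℂ (Matrix.toEuclideanCLM (𝕜 := ℂ) (Aᴴ * A)) := by
    have heq := AlgEquiv.spectrum_eq
      (F := Matrix (Fin n) (Fin n) ℂ ≃⋆ₐ[ℂ]
        ((EuclideanSpace ℂ (Fin n)) →L[ℂ] (EuclideanSpace ℂ (Fin n))))
      (Matrix.toEuclideanCLM (𝕜 := ℂ)) (Aᴴ * A)
    rw [heq]; exact h2
  have h4 := spectrum.norm_le_norm_mul_of_mem h3
  have h5 : ‖Matrix.toEuclideanCLM (𝕜 := ℂ) (Aᴴ * A)‖ ≤ opNorm A ^ 2 := by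
    rw [_root_.map_mul]
    calc ‖Matrix.toEuclideanCLM (𝕜 := ℂ) Aᴴ * Matrix.toEuclideanCLM (𝕜 := ℂ) A‖
        ≤ ‖Matrix.toEuclideanCLM (𝕜 := ℂ) Aᴴ‖ * ‖Matrix.toEuclideanCLM (𝕜 := ℂ) A‖ :=
          norm_mul_le _ _
      _ = opNorm A ^ 2 := by
          have hst : Aᴴ = star A := rfl
          rw [hst, map_star, ContinuousLinearMap.star_eq_adjoint, opNorm, sq]
          rw [LinearIsometryEquiv.norm_map ContinuousLinearMap.adjoint]
  have h6 : ‖(1 : (EuclideanSpace ℂ (Fin n)) →L[ℂ] (EuclideanSpace ℂ (Fin n)))‖ ≤ 1 :=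
    ContinuousLinearMap.norm_id_le
  have habs : |lam| ≤ opNorm A ^ 2 := by
    have hnn : (0:ℝ) ≤ ‖Matrix.toEuclideanCLM (𝕜 := ℂ) (Aᴴ * A)‖ := norm_nonneg _
    have : ‖(lam : ℂ)‖ = |lam| := by simp [Complex.norm_real]
    nlinarith [h4, h5, h6, hnn]
  exact (le_abs_self lam).trans habs

lemma mem_svList_bounds {n : ℕ} (A : Matrix (Fin n) (Fin n) ℂ) {x : ℝ}
    (hx : x ∈ svList A) : 0 ≤ x ∧ x ≤ opNorm A := by
  rw [svList, Multiset.mem_sort, Multiset.mem_map] at hx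
  obtain ⟨i, _, rfl⟩ := hx
  refine ⟨Real.sqrt_nonneg _, ?_⟩
  have := eig_le_sq A i
  calc Real.sqrt _ ≤ Real.sqrt (opNorm A ^ 2) := Real.sqrt_le_sqrt this
    _ = opNorm A := by exact Real.sqrt_sq (by rw [opNorm]; exact norm_nonneg _)

lemma svList_length {n : ℕ} (A : Matrix (Fin n) (Fin n) ℂ) : (svList A).length = n := by
  rw [svList, Multiset.length_sort]
  simp

lemma svList_getD_nonneg {n : ℕ} (A : Matrix (Fin n) (Fin n) ℂ) (j : ℕ) :
    0 ≤ (svList A).getD j 0 := by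
  rcases lt_or_ge j (svList A).length with h | h
  · rw [List.getD_eq_getElem _ _ h]
    exact (mem_svList_bounds A (List.getElem_mem h)).1
  · rw [List.getD_eq_default _ _ h]

lemma svList_getD_le {n : ℕ} (A : Matrix (Fin n) (Fin n) ℂ) (j : ℕ) :
    (svList A).getD j 0 ≤ max (opNorm A) 0 := by
  rcases lt_or_ge j (svList A).length with h | h
  · rw [List.getD_eq_getElem _ _ h]
    exact le_max_of_le_left (mem_svList_bounds A (List.getElem_mem h)).2
  · rw [List.getD_eq_default _ _ h]
    exact le_max_right _ _

lemma sigUpper_nonneg {n : ℕ} (A : Matrix (Fin n) (Fin n) ℂ) (k : ℕ) :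
    0 ≤ sigUpper A k := by
  rw [sigUpper]; split
  · exact svList_getD_nonneg A _
  · exact le_refl 0

lemma sigUpper_le {n : ℕ} (A : Matrix (Fin n) (Fin n) ℂ) (k : ℕ) :
    sigUpper A k ≤ max (opNorm A) 0 := by
  rw [sigUpper]; split
  · exact svList_getD_le A _
  · exact le_max_right _ _

lemma sigUpper_anti {n : ℕ} (A : Matrix (Fin n) (Fin n) ℂ) {k k' : ℕ}
    (h1 : 1 ≤ k) (hkk' : k ≤ k') : sigUpper A k' ≤ sigUpper A k := by
  by_cases h2 : k' ≤ n
  · have hk2 : k ≤ n := hkk'.trans h2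
    rw [sigUpper, sigUpper, if_pos ⟨h1.trans hkk', h2⟩, if_pos ⟨h1, hk2⟩]
    have hlen := svList_length A
    have hi1 : n - k' < (svList A).length := by omega
    have hi2 : n - k < (svList A).length := by omega
    rw [List.getD_eq_getElem _ _ hi1, List.getD_eq_getElem _ _ hi2]
    have hsorted : (svList A).Pairwise (· ≤ ·) := Multiset.pairwise_sort _ _
    exact hsorted.rel_get_of_le (a := ⟨n - k', hi1⟩) (b := ⟨n - k, hi2⟩) (by simp; omega)
  · calc sigUpper A k' = 0 := by rw [sigUpper, if_neg (by omega)]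
      _ ≤ sigUpper A k := sigUpper_nonneg A k

/-- for a bounded sequence `(K_n)` of matrices `K_n ∈ ℂ^{δ(n)×δ(n)}` (with `δ`
strictly increasing), `lim_{k→∞} sup_{n≥k} Σ_k(K_n) = 0` iff
`lim_{k→∞} limsup_{n→∞} Σ_k(K_n) = 0`. -/
theorem stmt7 (δ : ℕ → ℕ) (hδ : StrictMono δ)
    (K : ∀ n, Matrix (Fin (δ n)) (Fin (δ n)) ℂ)
    (hK : ∃ M, ∀ n, opNorm (K n) ≤ M) :
    Tendsto (fun k => ⨆ n : {m : ℕ // k ≤ m}, sigUpper (K n.1) k) atTop (𝓝 0) ↔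
    Tendsto (fun k => limsup (fun n => sigUpper (K n) k) atTop) atTop (𝓝 0) := by
  obtain ⟨M, hM⟩ := hK
  set M' : ℝ := max M 0 with hM'
  have hb : ∀ n k, sigUpper (K n) k ≤ M' := fun n k =>
    (sigUpper_le (K n) k).trans (max_le_max (hM n) le_rfl)
  have hnn : ∀ n k, (0:ℝ) ≤ sigUpper (K n) k := fun n k => sigUpper_nonneg (K n) k
  haveI : ∀ k : ℕ, Nonempty {m : ℕ // k ≤ m} := fun k => ⟨⟨k, le_rfl⟩⟩
  set f : ℕ → ℝ := fun k => ⨆ n : {m : ℕ // k ≤ m}, sigUpper (K n.1) k with hf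
  set g : ℕ → ℝ := fun k => limsup (fun n => sigUpper (K n) k) atTop with hg
  have hBdd : ∀ k, BddAbove (Set.range fun n : {m : ℕ // k ≤ m} => sigUpper (K n.1) k) :=
    fun k => ⟨M', by rintro x ⟨n, rfl⟩; exact hb n.1 k⟩
  have hf0 : ∀ k, 0 ≤ f k := fun k =>
    (hnn k k).trans (le_ciSup (hBdd k) ⟨k, le_rfl⟩)
  have hgb : ∀ k, IsBoundedUnder (· ≤ ·) (atTop : Filter ℕ) (fun n => sigUpper (K n) k) :=
    fun k => isBoundedUnder_of ⟨M', fun n : ℕ => hb n k⟩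
  have hg0 : ∀ k, 0 ≤ g k := fun k =>
    le_limsup_of_frequently_le (Frequently.of_forall fun n : ℕ => hnn n k) (hgb k)
  have hgf : ∀ k, g k ≤ f k := by
    intro k
    refine limsup_le_of_le ?_ ?_
    · exact (isBoundedUnder_of ⟨0, fun n : ℕ => hnn n k⟩ :
        IsBoundedUnder (· ≥ ·) (atTop : Filter ℕ) _).isCoboundedUnder_flip
    · filter_upwards [eventually_ge_atTop k] with n hn
      exact le_ciSup (hBdd k) ⟨n, hn⟩
  constructor
  · intro h
    exact tendsto_of_tendsto_of_tendsto_of_le_of_le tendsto_const_nhds h hg0 hgf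
  · intro h
    rw [Metric.tendsto_atTop] at h ⊢
    intro ε hε
    obtain ⟨N0, hN0⟩ := h (ε / 2) (by positivity)
    set k0 : ℕ := max N0 1 with hk0
    have hgk0 : g k0 < ε / 2 := by
      have := hN0 k0 (le_max_left _ _)
      rwa [Real.dist_eq, sub_zero, abs_of_nonneg (hg0 k0)] at this
    have hev : ∀ᶠ n in atTop, sigUpper (K n) k0 < ε / 2 :=
      eventually_lt_of_limsup_lt hgk0 (hgb k0)
    obtain ⟨N1, hN1⟩ := eventually_atTop.1 hev
    refine ⟨max k0 N1, fun k hk => ?_⟩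
    have hk0k : k0 ≤ k := (le_max_left _ _).trans hk
    have hN1k : N1 ≤ k := (le_max_right _ _).trans hk
    have hfk : f k ≤ ε / 2 := by
      refine ciSup_le fun n => ?_
      have h1 : sigUpper (K n.1) k ≤ sigUpper (K n.1) k0 :=
        sigUpper_anti (K n.1) (le_max_right N0 1) hk0k
      exact h1.trans (hN1 n.1 (hN1k.trans n.2)).le
    rw [Real.dist_eq, sub_zero, abs_of_nonneg (hf0 k)]
    linarith
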